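/- Let X be a Banach space, f : X → ℝ ∪ {+∞} proper convex lsc, x ∈ dom f, ε > 0, and x* ∈ ∂_ε f(x). Then for every λ > 0 there exist x̄ ∈ X and x̄* ∈ ∂f(x̄) such that ‖x̄ − x‖ ≤ ε/λ, ‖x̄* − x*‖ ≤ λ, and |f(x̄) − ⟨x̄*, x̄ − x⟩ − f(x)| ≤ 2ε. -/

import Mathlib

open Filter Topology

noncomputable section

set_option maxHeartbeats 1000000 in

/-- Ekeland's variational principle (the form we need). -/
theorem ekeland_aux {X : Type*} [MetricSpace X] [CompleteSpace X]
    (h : X → ℝ) (hlsc : LowerSemicontinuous h) (B : ℝ) (hB : ∀ y, B ≤ h y)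
    (lam : ℝ) (hlam : 0 < lam) (x : X) :
    ∃ xb : X, h xb + lam * dist xb x ≤ h x ∧ ∀ y, h xb ≤ h y + lam * dist y xb := by
  -- step of the construction
  have step : ∀ (n : ℕ) (z : X), ∃ y : X,
      (h y + lam * dist y z ≤ h z) ∧
      ∀ w, (h w + lam * dist w z ≤ h z) → h y ≤ h w + (1/2 : ℝ)^n := by
    intro n z
    set S : Set X := {w | h w + lam * dist w z ≤ h z} with hS
    have hzS : z ∈ S := by simp [hS]
    have hne : (h '' S).Nonempty := ⟨h z, z, hzS, rfl⟩
    have hbdd : BddBelow (h '' S) := ⟨B, by rintro _ ⟨w, -, rfl⟩; exact hB w⟩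
    have hlt : sInf (h '' S) < sInf (h '' S) + (1/2 : ℝ)^n := by
      have : (0:ℝ) < (1/2 : ℝ)^n := by positivity
      linarith
    obtain ⟨a, ⟨y, hyS, rfl⟩, hlt2⟩ := exists_lt_of_csInf_lt hne hlt
    refine ⟨y, hyS, fun w hw => ?_⟩
    have : sInf (h '' S) ≤ h w := csInf_le hbdd ⟨w, hw, rfl⟩
    linarith
  set seq : ℕ → X := fun n => Nat.rec x (fun k z => Classical.choose (step k z)) n with hseq
  have hseq0 : seq 0 = x := rfl
  have hseqS : ∀ n, seq (n+1) = Classical.choose (step n (seq n)) := fun n => rfl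
  have P1 : ∀ n, h (seq (n+1)) + lam * dist (seq (n+1)) (seq n) ≤ h (seq n) := by
    intro n; rw [hseqS n]; exact (Classical.choose_spec (step n (seq n))).1
  have P2 : ∀ n w, (h w + lam * dist w (seq n) ≤ h (seq n)) →
      h (seq (n+1)) ≤ h w + (1/2 : ℝ)^n := by
    intro n; rw [hseqS n]; exact (Classical.choose_spec (step n (seq n))).2
  -- chain inequality
  have chain : ∀ n m, n ≤ m → h (seq m) + lam * dist (seq m) (seq n) ≤ h (seq n) := by
    intro n m hnm
    induction m, hnm using Nat.le_induction with
    | base => simp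
    | succ m hnm ih =>
      have h1 := P1 m
      have htri : dist (seq (m+1)) (seq n) ≤ dist (seq (m+1)) (seq m) + dist (seq m) (seq n) :=
        dist_triangle _ _ _
      nlinarith [dist_nonneg (x := seq (m+1)) (y := seq m), dist_nonneg (x := seq m) (y := seq n)]
  have hmono : ∀ n m, n ≤ m → h (seq m) ≤ h (seq n) := by
    intro n m hnm
    have := chain n m hnm
    nlinarith [dist_nonneg (x := seq m) (y := seq n)]
  set L : ℝ := ⨅ n, h (seq n) with hL
  have hbddr : BddBelow (Set.range fun n => h (seq n)) := ⟨B, by rintro _ ⟨n, rfl⟩; exact hB _⟩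
  have hLle : ∀ n, L ≤ h (seq n) := fun n => ciInf_le hbddr n
  have htendL : Tendsto (fun n => h (seq n)) atTop (𝓝 L) :=
    tendsto_atTop_ciInf (fun a b hab => hmono a b hab) hbddr
  -- Cauchy
  have hcauchy : CauchySeq seq := by
    apply cauchySeq_of_le_tendsto_0 (fun N => 2 * (h (seq N) - L) / lam)
    · intro n m N hn hm
      have c1 := chain N n hn
      have c2 := chain N m hm
      have htri : dist (seq n) (seq m) ≤ dist (seq n) (seq N) + dist (seq m) (seq N) :=
        dist_triangle_right _ _ _
      have hLn := hLle n
      have hLm := hLle m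
      rw [le_div_iff₀ hlam]
      nlinarith
    · have : Tendsto (fun N => 2 * (h (seq N) - L) / lam) atTop (𝓝 (2 * (L - L) / lam)) := by
        exact ((htendL.sub_const L).const_mul 2).div_const lam
      simpa using this
  obtain ⟨xb, hxb⟩ := cauchySeq_tendsto_of_complete hcauchy
  -- h xb ≤ L
  have hxbL : h xb ≤ L := by
    by_contra hc
    push_neg at hc
    set c := (L + h xb)/2 with hc'
    have h1 : c < h xb := by simp [hc']; linarith
    have h2 : L < c := by simp [hc']; linarith
    have := hlsc xb c h1
    have hev : ∀ᶠ m in atTop, c < h (seq m) := hxb.eventually this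
    have hev2 : ∀ᶠ m in atTop, h (seq m) < c := htendL.eventually (eventually_lt_nhds h2)
    obtain ⟨m, hm1, hm2⟩ := (hev.and hev2).exists
    linarith
  -- xb in every S n
  have Sbar : ∀ n, h xb + lam * dist xb (seq n) ≤ h (seq n) := by
    intro n
    have hd : lam * dist xb (seq n) ≤ h (seq n) - L := by
      have : ∀ᶠ m in atTop, lam * dist (seq m) (seq n) ≤ h (seq n) - L := by
        filter_upwards [eventually_ge_atTop n] with m hm
        have := chain n m hm
        have := hLle m
        linarith
      have htd : Tendsto (fun m => lam * dist (seq m) (seq n)) atTop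
          (𝓝 (lam * dist xb (seq n))) :=
        ((hxb.dist tendsto_const_nhds).const_mul lam : _)
      exact le_of_tendsto htd this
    linarith
  refine ⟨xb, by simpa [hseq0] using Sbar 0, ?_⟩
  intro y
  by_contra hc
  push_neg at hc
  have hyS : ∀ n, h y + lam * dist y (seq n) ≤ h (seq n) := by
    intro n
    have htri : dist y (seq n) ≤ dist y xb + dist xb (seq n) := dist_triangle _ _ _
    have := Sbar n
    nlinarith
  have hLy : L ≤ h y := by
    have h1 : Tendsto (fun n => h (seq (n+1))) atTop (𝓝 L) := htendL.comp (tendsto_add_atTop_nat 1)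
    have h2 : Tendsto (fun n : ℕ => h y + (1/2 : ℝ)^n) atTop (𝓝 (h y + 0)) :=
      tendsto_const_nhds.add (tendsto_pow_atTop_nhds_zero_of_lt_one (by norm_num) (by norm_num))
    have := le_of_tendsto_of_tendsto' h1 h2 (fun n => P2 n y (hyS n))
    simpa using this
  have hdy : Tendsto (fun n => dist y (seq n)) atTop (𝓝 0) := by
    have hub : ∀ n, dist y (seq n) ≤ (h (seq n) - h y) / lam := by
      intro n
      rw [le_div_iff₀ hlam]
      have := hyS n
      linarith [mul_comm lam (dist y (seq n))]
    have hlb : ∀ n, (0:ℝ) ≤ dist y (seq n) := fun n => dist_nonneg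
    have htd : Tendsto (fun n => (h (seq n) - h y) / lam) atTop (𝓝 ((L - h y)/lam)) :=
      (htendL.sub_const (h y)).div_const lam
    have hLhy : (L - h y)/lam ≤ 0 := div_nonpos_of_nonpos_of_nonneg (by linarith) hlam.le
    have : Tendsto (fun n => (h (seq n) - h y) / lam) atTop (𝓝 0) := by
      rcases lt_or_eq_of_le hLhy with hlt | heq
      · exfalso
        obtain ⟨n, hn⟩ := (htd.eventually (eventually_lt_nhds hlt)).exists
        exact absurd ((hlb n).trans (hub n)) (not_le.2 hn)
      · rwa [heq] at htd
    exact squeeze_zero hlb hub this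
  have : Tendsto seq atTop (𝓝 y) := tendsto_iff_dist_tendsto_zero.2 (by simpa [dist_comm] using hdy)
  have hyx : y = xb := tendsto_nhds_unique this hxb
  rw [hyx] at hc
  simp at hc


private lemma le_add_all {a b : ℝ} (h : ∀ δ : ℝ, 0 < δ → a ≤ b + δ) : a ≤ b := by
  by_contra hc
  push_neg at hc
  have := h ((a - b)/2) (by linarith)
  linarith

private lemma ereal_sub_aux {a : EReal} {A r : ℝ} (h : ((A : ℝ) : EReal) ≤ a) :
    ((A - r : ℝ) : EReal) ≤ a - (r : EReal) := by
  rw [EReal.coe_sub]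
  exact EReal.sub_le_sub h le_rfl

/-- from `c < a` and `a ≤ d` (reals `c`, `d`) deduce `c < a.toReal`. -/
private lemma ereal_lt_toReal {a : EReal} {c d : ℝ} (h1 : (c : EReal) < a)
    (h2 : a ≤ (d : EReal)) : c < a.toReal := by
  have hnt : a ≠ ⊤ := fun h => by simp [h] at h2
  have hnb : a ≠ ⊥ := fun h => by simp [h] at h1
  rw [← EReal.coe_toReal hnt hnb] at h1
  exact_mod_cast h1

private lemma ereal_toReal_le {a : EReal} {c d : ℝ} (h1 : (c : EReal) ≤ a)
    (h2 : a ≤ (d : EReal)) : a.toReal ≤ d := by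
  have hnb : a ≠ ⊥ := fun h => by simp [h] at h1
  have := EReal.toReal_le_toReal h2 hnb (EReal.coe_ne_top d)
  simpa using this

private lemma ereal_le_toReal {a : EReal} {c d : ℝ} (h1 : (c : EReal) ≤ a)
    (h2 : a ≤ (d : EReal)) : c ≤ a.toReal := by
  have hnt : a ≠ ⊤ := fun h => by simp [h] at h2
  have := EReal.toReal_le_toReal h1 (EReal.coe_ne_bot c) hnt
  simpa using this

set_option maxHeartbeats 4000000 in
/-- Quantitative Brøndsted–Rockafellar theorem with function-value estimate: if `f` is proper
convex lsc on a Banach space, `x ∈ dom f`, `ε > 0` and `x* ∈ ∂_ε f(x)`, then for every `λ > 0`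
there are `x̄` and `x̄* ∈ ∂f(x̄)` with `‖x̄ − x‖ ≤ ε/λ`, `‖x̄* − x*‖ ≤ λ` and
`|f(x̄) − ⟨x̄*, x̄ − x⟩ − f(x)| ≤ 2ε`. -/
theorem brondsted_rockafellar_with_value_estimate
    {X : Type*} [NormedAddCommGroup X] [NormedSpace ℝ X] [CompleteSpace X]
    (f : X → EReal)
    (hne_bot : ∀ y : X, f y ≠ ⊥) (hne_top : ∃ y : X, f y ≠ ⊤)
    (hconv : Convex ℝ {p : X × ℝ | f p.1 ≤ (p.2 : EReal)})
    (hlsc : LowerSemicontinuous f)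
    (x : X) (fx : ℝ) (hfx : f x = (fx : EReal))
    (ε : ℝ) (hε : 0 < ε)
    (xstar : StrongDual ℝ X)
    (hxstar : ∀ y : X, ((xstar y - xstar x : ℝ) : EReal) ≤ f y - f x + (ε : EReal)) :
    ∀ lam : ℝ, 0 < lam →
      ∃ (xb : X) (xbs : StrongDual ℝ X),
        ‖xb - x‖ ≤ ε / lam ∧ ‖xbs - xstar‖ ≤ lam ∧
        (∀ y : X, ((xbs y - xbs xb : ℝ) : EReal) ≤ f y - f xb) ∧
        ∃ r : ℝ, f xb = (r : EReal) ∧ |r - xbs (xb - x) - fx| ≤ 2 * ε := by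
  intro lam hlam
  set gx : ℝ := fx - xstar x with hgx
  -- Step A : global lower bound coming from the ε-subdifferential inequality
  have lb : ∀ y : X, ((gx - ε + xstar y : ℝ) : EReal) ≤ f y := by
    intro y
    rcases eq_or_ne (f y) ⊤ with hy | hy
    · rw [hy]; exact le_top
    · have hy' : f y = ((f y).toReal : EReal) := (EReal.coe_toReal hy (hne_bot y)).symm
      set ρ : ℝ := (f y).toReal with hρ
      have := hxstar y
      rw [hfx, hy'] at this
      rw [hy']
      rw [show ((ρ : ℝ) : EReal) - (fx : EReal) + (ε : EReal) = ((ρ - fx + ε : ℝ) : EReal) by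
        push_cast; rfl] at this
      rw [EReal.coe_le_coe_iff] at this ⊢
      linarith
  -- convexity in usable form
  have hcvx : ∀ (a b : ℝ) (y1 y2 : X) (r1 r2 : ℝ), 0 ≤ a → 0 ≤ b → a + b = 1 →
      f y1 ≤ (r1 : EReal) → f y2 ≤ (r2 : EReal) →
      f (a • y1 + b • y2) ≤ ((a * r1 + b * r2 : ℝ) : EReal) := by
    intro a b y1 y2 r1 r2 ha hb hab h1 h2
    have := hconv (show ((y1, r1) : X × ℝ) ∈ _ from h1) (show ((y2, r2) : X × ℝ) ∈ _ from h2)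
      ha hb hab
    simpa [Prod.smul_mk, smul_eq_mul] using this
  -- Step B : the truncated real-valued function h
  obtain ⟨M, hM⟩ : ∃ M : X → EReal, M = fun y => min (f y) ((gx + xstar y : ℝ) : EReal) :=
    ⟨_, rfl⟩
  have hMlb : ∀ y, ((gx - ε + xstar y : ℝ) : EReal) ≤ M y := by
    intro y
    rw [hM]
    refine le_min (lb y) ?_
    rw [EReal.coe_le_coe_iff]
    linarith
  have hMub : ∀ y, M y ≤ ((gx + xstar y : ℝ) : EReal) := by
    intro y; rw [hM]; exact min_le_right _ _
  have hMf : ∀ y, M y ≤ f y := by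
    intro y; rw [hM]; exact min_le_left _ _
  obtain ⟨h, hh⟩ : ∃ h : X → ℝ, h = fun y => (M y).toReal - xstar y := ⟨_, rfl⟩
  have hhlb : ∀ y, gx - ε ≤ h y := by
    intro y
    have := ereal_le_toReal (hMlb y) (hMub y)
    rw [hh]; dsimp only; linarith
  have hhub : ∀ y, h y ≤ gx := by
    intro y
    have := ereal_toReal_le (hMlb y) (hMub y)
    rw [hh]; dsimp only; linarith
  have hcoeM : ∀ y, (((h y + xstar y : ℝ)) : EReal) = M y := by
    intro y
    have h1 : (h y + xstar y) = (M y).toReal := by rw [hh]; dsimp only; ring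
    rw [h1]
    refine EReal.coe_toReal ?_ ?_
    · intro ht
      have := hMub y
      rw [ht, top_le_iff] at this
      exact (EReal.coe_ne_top _) this
    · intro ht
      exact EReal.coe_ne_bot _ (le_bot_iff.1 (ht ▸ hMlb y))
  have F3 : ∀ y, ((h y + xstar y : ℝ) : EReal) ≤ f y := by
    intro y; rw [hcoeM y]; exact hMf y
  have hhx : h x = gx := by
    have hMx : M x = (fx : EReal) := by
      rw [hM]; dsimp only
      rw [hfx, hgx, show (fx - xstar x + xstar x : ℝ) = fx by ring]
      exact min_self _
    rw [hh]; dsimp only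
    rw [hMx, EReal.toReal_coe, hgx]
  -- Step B' : h is lower semicontinuous
  have hlsch : LowerSemicontinuous h := by
    intro y c hc
    obtain ⟨c', hcc', hc'h⟩ : ∃ c', c < c' ∧ c' < h y := ⟨(c + h y)/2, by linarith, by linarith⟩
    have hfy : ((c' + xstar y : ℝ) : EReal) < f y := by
      refine lt_of_lt_of_le ?_ (F3 y)
      rw [EReal.coe_lt_coe_iff]
      linarith
    have ev1 : ∀ᶠ z in 𝓝 y, ((c' + xstar y : ℝ) : EReal) < f z := hlsc y _ hfy
    have ev2 : ∀ᶠ z in 𝓝 y, xstar z < xstar y + (c' - c) :=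
      (xstar.continuous.tendsto y).eventually
        (eventually_lt_nhds (by linarith : xstar y < xstar y + (c' - c)))
    filter_upwards [ev1, ev2] with z h1 h2
    have hlt : ((c + xstar z : ℝ) : EReal) < M z := by
      rw [hM]
      refine lt_min ?_ ?_
      · exact lt_of_lt_of_le (by rw [EReal.coe_lt_coe_iff]; linarith) h1.le
      · rw [EReal.coe_lt_coe_iff]
        have := hhub y
        linarith
    have := ereal_lt_toReal hlt (hMub z)
    rw [hh]; dsimp only
    linarith
  -- Step C : Ekeland
  obtain ⟨xb, E1, E2⟩ := ekeland_aux h hlsch (gx - ε) hhlb lam hlam x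
  rw [hhx] at E1
  set m : ℝ := h xb with hm
  set r : ℝ := m + xstar xb with hr
  have hdist : lam * dist xb x ≤ ε := by
    have := hhlb xb
    linarith
  -- Step D : f xb = r
  have hfxb : f xb = (r : EReal) := by
    rcases eq_or_ne xb x with hxx | hxx
    · have hmgx : m = gx := by rw [hm, hxx, hhx]
      rw [hxx, hfx, hr, hmgx, hgx, hxx]
      norm_cast
      ring
    · have hdpos : 0 < dist xb x := dist_pos.2 hxx
      have hmlt : m < gx := by nlinarith
      have hflt : f xb < ((gx + xstar xb : ℝ) : EReal) := by
        by_contra hge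
        push_neg at hge
        have hMeq : M xb = ((gx + xstar xb : ℝ) : EReal) := by
          rw [hM]; exact min_eq_right hge
        have : h xb = gx := by
          rw [hh]; dsimp only
          rw [hMeq, EReal.toReal_coe]
          ring
        rw [← hm] at this
        linarith
      have hMeq : M xb = f xb := by rw [hM]; exact min_eq_left hflt.le
      have := hcoeM xb
      rw [hMeq] at this
      rw [← this, hr, hm]
  -- key inequality from Ekeland at xb
  have K : ∀ w : X, ((m - lam * ‖w‖ + xstar (xb + w) : ℝ) : EReal) ≤ f (xb + w) := by
    intro w
    have := E2 (xb + w)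
    have hd : dist (xb + w) xb = ‖w‖ := by
      rw [dist_eq_norm]; congr 1; abel
    rw [hd] at this
    refine le_trans ?_ (F3 (xb + w))
    rw [EReal.coe_le_coe_iff]
    linarith
  -- Step G : the sets B v and the function q
  obtain ⟨Bs, hBs⟩ : ∃ Bs : X → Set ℝ, Bs = fun v =>
      {s | ∃ w : X, f (xb + w) ≤ ((m + s - lam * ‖v - w‖ + xstar (xb + w) : ℝ) : EReal)} :=
    ⟨_, rfl⟩
  have hBs_mem : ∀ v s, s ∈ Bs v ↔
      ∃ w : X, f (xb + w) ≤ ((m + s - lam * ‖v - w‖ + xstar (xb + w) : ℝ) : EReal) := by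
    intro v s; rw [hBs]; rfl
  have hBmem : ∀ v, lam * ‖v‖ ∈ Bs v := by
    intro v
    rw [hBs_mem]
    refine ⟨0, ?_⟩
    rw [add_zero, sub_zero, hfxb]
    rw [EReal.coe_le_coe_iff]
    simp [hr]
  have hBlow : ∀ v, ∀ s ∈ Bs v, -(lam * ‖v‖) ≤ s := by
    intro v s hs
    rw [hBs_mem] at hs
    obtain ⟨w, hw⟩ := hs
    have h1 := (K w).trans hw
    rw [EReal.coe_le_coe_iff] at h1
    have h2 : ‖w‖ ≤ ‖v - w‖ + ‖v‖ := by
      calc ‖w‖ = ‖v - (v - w)‖ := by congr 1; abel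
      _ ≤ ‖v‖ + ‖v - w‖ := norm_sub_le _ _
      _ = ‖v - w‖ + ‖v‖ := by ring
    nlinarith [norm_nonneg (v - w), norm_nonneg v, norm_nonneg w]
  have hBne : ∀ v, (Bs v).Nonempty := fun v => ⟨_, hBmem v⟩
  have hBbdd : ∀ v, BddBelow (Bs v) := fun v => ⟨-(lam * ‖v‖), fun s hs => hBlow v s hs⟩
  obtain ⟨q, hq⟩ : ∃ q : X → ℝ, q = fun v => sInf (Bs v) := ⟨_, rfl⟩
  have hq' : ∀ v, q v = sInf (Bs v) := fun v => by rw [hq]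
  have hqub : ∀ v, q v ≤ lam * ‖v‖ := fun v => (hq' v) ▸ csInf_le (hBbdd v) (hBmem v)
  have hqlb : ∀ v, -(lam * ‖v‖) ≤ q v := fun v => (hq' v) ▸ le_csInf (hBne v) (hBlow v)
  have hq0 : q 0 = 0 := by
    have h1 := hqub 0
    have h2 := hqlb 0
    simp at h1 h2
    linarith
  -- q is convex
  have hqle : ∀ v s, s ∈ Bs v → q v ≤ s := fun v s hs => (hq' v) ▸ csInf_le (hBbdd v) hs
  have hqconv : ∀ (a b : ℝ) (v1 v2 : X), 0 ≤ a → 0 ≤ b → a + b = 1 →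
      q (a • v1 + b • v2) ≤ a * q v1 + b * q v2 := by
    intro a b v1 v2 ha hb hab
    refine le_add_all fun δ hδ => ?_
    have habs : 0 < a + b := by rw [hab]; norm_num
    obtain ⟨s1, hs1B, hs1⟩ : ∃ s1 ∈ Bs v1, s1 < q v1 + δ/2 := by
      have := exists_lt_of_csInf_lt (hBne v1) (show sInf (Bs v1) < q v1 + δ/2 by
        rw [← hq' v1]; linarith)
      tauto
    obtain ⟨s2, hs2B, hs2⟩ : ∃ s2 ∈ Bs v2, s2 < q v2 + δ/2 := by
      have := exists_lt_of_csInf_lt (hBne v2) (show sInf (Bs v2) < q v2 + δ/2 by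
        rw [← hq' v2]; linarith)
      tauto
    rw [hBs_mem] at hs1B hs2B
    obtain ⟨w1, hw1⟩ := hs1B
    obtain ⟨w2, hw2⟩ := hs2B
    have hmem : a * s1 + b * s2 ∈ Bs (a • v1 + b • v2) := by
      rw [hBs_mem]
      refine ⟨a • w1 + b • w2, ?_⟩
      have hpt : a • (xb + w1) + b • (xb + w2) = xb + (a • w1 + b • w2) := by
        rw [smul_add, smul_add]
        rw [show a • xb + a • w1 + (b • xb + b • w2)
            = (a + b) • xb + (a • w1 + b • w2) by rw [add_smul]; abel, hab, one_smul]
      have := hcvx a b (xb + w1) (xb + w2) _ _ ha hb hab hw1 hw2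
      rw [hpt] at this
      refine this.trans ?_
      rw [EReal.coe_le_coe_iff]
      have hnrm : ‖(a • v1 + b • v2) - (a • w1 + b • w2)‖
          ≤ a * ‖v1 - w1‖ + b * ‖v2 - w2‖ := by
        have : (a • v1 + b • v2) - (a • w1 + b • w2) = a • (v1 - w1) + b • (v2 - w2) := by
          rw [smul_sub, smul_sub]; abel
        rw [this]
        refine (norm_add_le _ _).trans ?_
        rw [norm_smul, norm_smul, Real.norm_eq_abs, Real.norm_eq_abs, abs_of_nonneg ha,
          abs_of_nonneg hb]
      have hxs : a * xstar (xb + w1) + b * xstar (xb + w2)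
          = xstar (xb + (a • w1 + b • w2)) := by
        rw [← hpt]
        simp
        ring
      have e1 : a*m + b*m = m := by rw [← add_mul, hab, one_mul]
      nlinarith [mul_le_mul_of_nonneg_left hnrm hlam.le, e1, hxs]
    have := hqle _ _ hmem
    nlinarith
  -- monotone difference quotients
  have hqmono : ∀ (v : X) (t T : ℝ), 0 < t → t ≤ T → q (t • v) / t ≤ q (T • v) / T := by
    intro v t T ht htT
    have hT : 0 < T := lt_of_lt_of_le ht htT
    have h1 : q (t • v) ≤ (t/T) * q (T • v) := by
      have hc := hqconv (t/T) (1 - t/T) (T • v) 0 (by positivity)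
        (by rw [sub_nonneg]; exact div_le_one_of_le₀ htT hT.le) (by ring)
      rw [smul_smul, div_mul_cancel₀ _ hT.ne', smul_zero, add_zero, hq0] at hc
      linarith
    rw [div_le_div_iff₀ ht hT]
    calc q (t • v) * T ≤ ((t/T) * q (T • v)) * T := by nlinarith
    _ = q (T • v) * t := by field_simp
  -- the sublinear functional p
  obtain ⟨p, hp⟩ : ∃ p : X → ℝ, p = fun v => sInf {u | ∃ t : ℝ, 0 < t ∧ u = q (t • v) / t} :=
    ⟨_, rfl⟩
  have hp' : ∀ v, p v = sInf {u | ∃ t : ℝ, 0 < t ∧ u = q (t • v) / t} := fun v => by rw [hp]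
  have hPne : ∀ v : X, Set.Nonempty {u | ∃ t : ℝ, 0 < t ∧ u = q (t • v) / t} := by
    intro v
    exact ⟨q v, 1, one_pos, by rw [one_smul]; norm_num⟩
  have hPlow : ∀ v : X, ∀ u ∈ {u | ∃ t : ℝ, 0 < t ∧ u = q (t • v) / t}, -(lam * ‖v‖) ≤ u := by
    rintro v u ⟨t, ht, rfl⟩
    have := hqlb (t • v)
    rw [norm_smul, Real.norm_eq_abs, abs_of_pos ht] at this
    rw [le_div_iff₀ ht]
    nlinarith
  have hPbdd : ∀ v : X, BddBelow {u | ∃ t : ℝ, 0 < t ∧ u = q (t • v) / t} := fun v =>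
    ⟨-(lam * ‖v‖), hPlow v⟩
  have hple : ∀ v (t : ℝ), 0 < t → p v ≤ q (t • v) / t := by
    intro v t ht
    rw [hp' v]
    exact csInf_le (hPbdd v) ⟨t, ht, rfl⟩
  have hpq : ∀ v, p v ≤ q v := by
    intro v
    have := hple v 1 one_pos
    rwa [one_smul, div_one] at this
  have hpub : ∀ v, p v ≤ lam * ‖v‖ := fun v => (hpq v).trans (hqub v)
  have hplb : ∀ v, -(lam * ‖v‖) ≤ p v := fun v => (hp' v) ▸ le_csInf (hPne v) (hPlow v)
  -- p is positively homogeneous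
  have hphom_le : ∀ (c : ℝ), 0 < c → ∀ v, p (c • v) ≤ c * p v := by
    intro c hc v
    have step : ∀ u ∈ {u | ∃ t : ℝ, 0 < t ∧ u = q (t • v) / t}, p (c • v) / c ≤ u := by
      rintro u ⟨t, ht, rfl⟩
      rw [div_le_iff₀ hc]
      have : p (c • v) ≤ q ((t/c) • (c • v)) / (t/c) := hple (c • v) (t/c) (by positivity)
      rw [smul_smul, div_mul_cancel₀ _ hc.ne'] at this
      refine this.trans (le_of_eq ?_)
      rw [div_div_eq_mul_div, mul_div_right_comm]
    have h2 : p (c • v) / c ≤ p v := by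
      rw [hp' v]
      exact le_csInf (hPne v) step
    rw [div_le_iff₀ hc] at h2
    linarith [h2]
  have hphom : ∀ (c : ℝ), 0 < c → ∀ v, p (c • v) = c * p v := by
    intro c hc v
    refine le_antisymm (hphom_le c hc v) ?_
    have := hphom_le c⁻¹ (by positivity) (c • v)
    rw [smul_smul, inv_mul_cancel₀ hc.ne', one_smul] at this
    have h2 : c * p v ≤ c * (c⁻¹ * p (c • v)) := by
      exact mul_le_mul_of_nonneg_left this hc.le
    rw [← mul_assoc, mul_inv_cancel₀ hc.ne', one_mul] at h2
    exact h2
  -- p is subadditive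
  have hpadd : ∀ v1 v2, p (v1 + v2) ≤ p v1 + p v2 := by
    intro v1 v2
    refine le_add_all fun δ hδ => ?_
    obtain ⟨u1, hu1B, hu1⟩ : ∃ u1 ∈ {u | ∃ t : ℝ, 0 < t ∧ u = q (t • v1) / t},
        u1 < p v1 + δ/2 := by
      have := exists_lt_of_csInf_lt (hPne v1)
        (show sInf {u | ∃ t : ℝ, 0 < t ∧ u = q (t • v1) / t} < p v1 + δ/2 by
          rw [← hp' v1]; linarith)
      tauto
    obtain ⟨u2, hu2B, hu2⟩ : ∃ u2 ∈ {u | ∃ t : ℝ, 0 < t ∧ u = q (t • v2) / t},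
        u2 < p v2 + δ/2 := by
      have := exists_lt_of_csInf_lt (hPne v2)
        (show sInf {u | ∃ t : ℝ, 0 < t ∧ u = q (t • v2) / t} < p v2 + δ/2 by
          rw [← hp' v2]; linarith)
      tauto
    obtain ⟨t1, ht1, rfl⟩ := hu1B
    obtain ⟨t2, ht2, rfl⟩ := hu2B
    obtain ⟨t, htdef⟩ : ∃ t : ℝ, t = min t1 t2 / 2 := ⟨_, rfl⟩
    have ht : 0 < t := by rw [htdef]; positivity
    have h2t1 : 2 * t ≤ t1 := by
      rw [htdef]; have := min_le_left t1 t2; linarith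
    have h2t2 : 2 * t ≤ t2 := by
      rw [htdef]; have := min_le_right t1 t2; linarith
    have hconv2 : q (t • (v1 + v2)) ≤ (1/2) * q ((2*t) • v1) + (1/2) * q ((2*t) • v2) := by
      have hc := hqconv (1/2) (1/2) ((2*t) • v1) ((2*t) • v2) (by norm_num) (by norm_num)
        (by norm_num)
      rw [smul_smul, smul_smul] at hc
      rw [show (1/2 : ℝ) * (2*t) = t by ring] at hc
      rw [← smul_add] at hc
      exact hc
    have key : q (t • (v1 + v2)) / t ≤ q ((2*t) • v1) / (2*t) + q ((2*t) • v2) / (2*t) := by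
      have h1 : q (t • (v1 + v2)) / t ≤ ((1/2) * q ((2*t) • v1) + (1/2) * q ((2*t) • v2)) / t :=
        div_le_div_of_nonneg_right hconv2 ht.le
      refine h1.trans (le_of_eq ?_)
      field_simp
      try ring
    have m1 : q ((2*t) • v1) / (2*t) ≤ q (t1 • v1) / t1 := hqmono v1 (2*t) t1 (by positivity) h2t1
    have m2 : q ((2*t) • v2) / (2*t) ≤ q (t2 • v2) / t2 := hqmono v2 (2*t) t2 (by positivity) h2t2
    have := hple (v1 + v2) t ht
    linarith
  -- Hahn–Banach
  obtain ⟨ξ, -, hξ⟩ := exists_extension_of_le_sublinear ((0 : X →ₗ[ℝ] ℝ).toPMap ⊥) p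
    (fun c hc v => hphom c hc v)
    (fun v1 v2 => hpadd v1 v2)
    (by
      rintro ⟨z, hz⟩
      have hz0 : z = 0 := by simpa using hz
      subst hz0
      have h0 : p 0 = 0 := by
        have h1 := hpub 0
        have h2 := hplb 0
        simp at h1 h2
        linarith
      simpa [LinearMap.toPMap_apply, h0] using le_refl (0:ℝ))
  have hξbound : ∀ v, |ξ v| ≤ lam * ‖v‖ := by
    intro v
    rw [abs_le]
    constructor
    · have := (hξ (-v)).trans (hpub (-v))
      rw [map_neg, norm_neg] at this
      linarith
    · exact (hξ v).trans (hpub v)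
  obtain ⟨ξc, hξc_apply, hξcnorm⟩ : ∃ ξc : X →L[ℝ] ℝ, (∀ v, ξc v = ξ v) ∧ ‖ξc‖ ≤ lam := by
    refine ⟨LinearMap.mkContinuous ξ lam
      (fun v => by rw [Real.norm_eq_abs]; simpa using hξbound v), fun v => rfl,
      LinearMap.mkContinuous_norm_le ξ hlam.le _⟩
  -- subgradient inequality
  have sg : ∀ v : X, ((m + ξ v + xstar (xb + v) : ℝ) : EReal) ≤ f (xb + v) := by
    intro v
    rcases eq_or_ne (f (xb + v)) ⊤ with htop | htop
    · rw [htop]; exact le_top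
    · have hco : f (xb + v) = ((f (xb + v)).toReal : EReal) :=
        (EReal.coe_toReal htop (hne_bot _)).symm
      set ρ : ℝ := (f (xb + v)).toReal with hρ
      have hsB : ρ - m - xstar (xb + v) ∈ Bs v := by
        rw [hBs_mem]
        refine ⟨v, ?_⟩
        rw [sub_self, norm_zero, mul_zero]
        rw [hco]
        rw [EReal.coe_le_coe_iff]
        ring_nf
        exact le_rfl
      have hq1 : q v ≤ ρ - m - xstar (xb + v) := hqle v _ hsB
      have : ξ v ≤ ρ - m - xstar (xb + v) := ((hξ v).trans (hpq v)).trans hq1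
      rw [hco, EReal.coe_le_coe_iff]
      linarith
  -- assemble
  refine ⟨xb, xstar + ξc, ?_, ?_, ?_, ?_⟩
  · rw [← dist_eq_norm]
    rw [le_div_iff₀ hlam]
    calc dist xb x * lam = lam * dist xb x := by ring
    _ ≤ ε := hdist
  · rw [add_sub_cancel_left]
    exact hξcnorm
  · intro y
    have hsg := sg (y - xb)
    rw [show xb + (y - xb) = y by abel] at hsg
    have hval : ((xstar + ξc) y - (xstar + ξc) xb : ℝ)
        = (m + ξ (y - xb) + xstar y) - r := by
      simp only [ContinuousLinearMap.add_apply, hξc_apply, hr]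
      rw [map_sub]
      try ring
    rw [hval, hfxb]
    exact ereal_sub_aux hsg
  · refine ⟨r, hfxb, ?_⟩
    have hval : (xstar + ξc) (xb - x) = xstar xb - xstar x + ξ (xb - x) := by
      simp only [ContinuousLinearMap.add_apply, hξc_apply]
      rw [map_sub]
      try ring
    have hξd : |ξ (xb - x)| ≤ ε := by
      refine (hξbound (xb - x)).trans ?_
      rw [← dist_eq_norm]
      exact hdist
    have hmb : gx - ε ≤ m := hhlb xb
    have hmu : m ≤ gx := by nlinarith [dist_nonneg (x := xb) (y := x)]
    rw [hval, hr]
    rw [abs_le] at hξd ⊢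
    constructor <;> (rw [hgx] at hmb hmu; linarith [hξd.1, hξd.2])
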